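/- For every sufficiently large even integer N: the number of primes p with N/2 − N^{0.919} ≤ p ≤ N/2 + N^{0.919}, N − p ≥ 1 and Ω(N − p) ≤ 3 is at least S₁'(N) − (1/2)·S₂'(N) − E'(N), where E'(N) is the number of primes p in [N/2 − N^{0.919}, N/2 + N^{0.919}] such that q² divides N − p for some prime q ≥ N^{1/11.99}. -/

import Mathlib

/-- `S₁'(N)`: the number of primes `p` with `N/2 − N^0.919 ≤ p ≤ N/2 + N^0.919`, `p ∤ N`,
such that every prime `q < N^(1/11.99)` with `q ∤ N` satisfies `q ∤ N − p`. -/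
noncomputable def S1' (N : ℕ) : ℕ :=
  {p : ℕ | p.Prime ∧ (N : ℝ) / 2 - (N : ℝ) ^ (0.919 : ℝ) ≤ (p : ℝ) ∧
    (p : ℝ) ≤ (N : ℝ) / 2 + (N : ℝ) ^ (0.919 : ℝ) ∧ ¬ p ∣ N ∧
    ∀ q : ℕ, q.Prime → (q : ℝ) < (N : ℝ) ^ (1 / 11.99 : ℝ) → ¬ q ∣ N →
      ¬ q ∣ (N - p)}.ncard

/-- `S₂'(N) = Σ_q #{p prime : N/2 − N^0.919 ≤ p ≤ N/2 + N^0.919, p ∤ N, q ∣ N − p, and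
every prime `r < N^(1/11.99)` with `r ∤ N` satisfies `r ∤ N − p}`, summed over primes `q`
with `N^(1/11.99) ≤ q < N^(1/3)` and `q ∤ N`; encoded as a count of pairs `(q, p)`. -/
noncomputable def S2' (N : ℕ) : ℕ :=
  {qp : ℕ × ℕ | qp.1.Prime ∧ (N : ℝ) ^ (1 / 11.99 : ℝ) ≤ (qp.1 : ℝ) ∧
    (qp.1 : ℝ) < (N : ℝ) ^ (1 / 3 : ℝ) ∧ ¬ qp.1 ∣ N ∧
    qp.2.Prime ∧ (N : ℝ) / 2 - (N : ℝ) ^ (0.919 : ℝ) ≤ (qp.2 : ℝ) ∧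
    (qp.2 : ℝ) ≤ (N : ℝ) / 2 + (N : ℝ) ^ (0.919 : ℝ) ∧ ¬ qp.2 ∣ N ∧
    qp.1 ∣ (N - qp.2) ∧
    ∀ r : ℕ, r.Prime → (r : ℝ) < (N : ℝ) ^ (1 / 11.99 : ℝ) → ¬ r ∣ N →
      ¬ r ∣ (N - qp.2)}.ncard

/-- `E'(N)`: the number of primes `p` in `[N/2 − N^0.919, N/2 + N^0.919]` such that `q²`
divides `N − p` for some prime `q ≥ N^(1/11.99)`. -/
noncomputable def E1' (N : ℕ) : ℕ :=
  {p : ℕ | p.Prime ∧ (N : ℝ) / 2 - (N : ℝ) ^ (0.919 : ℝ) ≤ (p : ℝ) ∧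
    (p : ℝ) ≤ (N : ℝ) / 2 + (N : ℝ) ^ (0.919 : ℝ) ∧
    ∃ q : ℕ, q.Prime ∧ (N : ℝ) ^ (1 / 11.99 : ℝ) ≤ (q : ℝ) ∧ q ^ 2 ∣ (N - p)}.ncard

lemma count_lemma (A G B A3 : Finset ℕ) (T : Finset (ℕ × ℕ)) (F : ℕ → Finset ℕ)
    (hsub : A ⊆ (G ∪ B) ∪ A3)
    (hF : ∀ p ∈ A3, 2 ≤ (F p).card)
    (hFT : ∀ p ∈ A3, ∀ q ∈ F p, (q, p) ∈ T) :
    (A.card : ℝ) ≤ G.card + B.card + T.card / 2 := by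
  classical
  have h1 : A.card ≤ G.card + B.card + A3.card := by
    calc A.card ≤ ((G ∪ B) ∪ A3).card := Finset.card_le_card hsub
      _ ≤ (G ∪ B).card + A3.card := Finset.card_union_le _ _
      _ ≤ G.card + B.card + A3.card :=
        add_le_add_left (Finset.card_union_le _ _) _
  have hdisj : ∀ p ∈ A3, ∀ p' ∈ A3, p ≠ p' →
      Disjoint (F p ×ˢ ({p} : Finset ℕ)) (F p' ×ˢ ({p'} : Finset ℕ)) := by
    intro p _ p' _ hne
    rw [Finset.disjoint_left]
    rintro ⟨a, b⟩ hx hx'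
    simp only [Finset.mem_product, Finset.mem_singleton] at hx hx'
    exact hne (hx.2.symm.trans hx'.2)
  have h2 : 2 * A3.card ≤ T.card := by
    calc 2 * A3.card = ∑ _p ∈ A3, 2 := by rw [Finset.sum_const, smul_eq_mul, mul_comm]
      _ ≤ ∑ p ∈ A3, (F p ×ˢ ({p} : Finset ℕ)).card := by
          refine Finset.sum_le_sum fun p hp => ?_
          rw [Finset.card_product, Finset.card_singleton, mul_one]
          exact hF p hp
      _ = (A3.biUnion fun p => F p ×ˢ ({p} : Finset ℕ)).card :=
          (Finset.card_biUnion hdisj).symm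
      _ ≤ T.card := by
          refine Finset.card_le_card ?_
          rintro ⟨a, b⟩ hx
          simp only [Finset.mem_biUnion, Finset.mem_product, Finset.mem_singleton] at hx
          obtain ⟨p, hp, hq, hx2⟩ := hx
          simpa [hx2] using hFT p hp a hq
  have h1' : (A.card : ℝ) ≤ G.card + B.card + A3.card := by exact_mod_cast h1
  have h2' : 2 * (A3.card : ℝ) ≤ T.card := by exact_mod_cast h2
  linarith

theorem weighted_sieve_short_intervals :
    ∃ N₀ : ℕ, ∀ N : ℕ, N₀ ≤ N → Even N →
      (S1' N : ℝ) - (1 / 2) * (S2' N : ℝ) - (E1' N : ℝ) ≤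
        ({p : ℕ | p.Prime ∧ (N : ℝ) / 2 - (N : ℝ) ^ (0.919 : ℝ) ≤ (p : ℝ) ∧
            (p : ℝ) ≤ (N : ℝ) / 2 + (N : ℝ) ^ (0.919 : ℝ) ∧ 1 ≤ N - p ∧
            (N - p).primeFactorsList.length ≤ 3}.ncard : ℝ) := by
  classical
  have hev : ∀ᶠ n : ℕ in Filter.atTop, (4 : ℝ) < (n : ℝ) ^ (0.081 : ℝ) ∧ 2 ≤ n := by
    have h1 : Filter.Tendsto (fun n : ℕ => (n : ℝ) ^ (0.081 : ℝ)) Filter.atTop Filter.atTop :=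
      (tendsto_rpow_atTop (by norm_num)).comp tendsto_natCast_atTop_atTop
    exact (h1.eventually_gt_atTop 4).and (Filter.eventually_ge_atTop 2)
  obtain ⟨N₀, hN₀⟩ := Filter.eventually_atTop.mp hev
  refine ⟨N₀, fun N hN _ => ?_⟩
  obtain ⟨h4, hN2⟩ := hN₀ N hN
  have hN0 : (0 : ℝ) < N := by exact_mod_cast (by omega : 0 < N)
  have hN1 : (1 : ℝ) ≤ N := by exact_mod_cast (by omega : 1 ≤ N)
  have hXN : 4 * (N : ℝ) ^ (0.919 : ℝ) < N := by
    have hsplit : (N : ℝ) = (N : ℝ) ^ (0.081 : ℝ) * (N : ℝ) ^ (0.919 : ℝ) := by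
      rw [← Real.rpow_add hN0]
      norm_num
    have h5 : 4 * (N : ℝ) ^ (0.919 : ℝ) < (N : ℝ) ^ (0.081 : ℝ) * (N : ℝ) ^ (0.919 : ℝ) :=
      mul_lt_mul_of_pos_right h4 (by positivity)
    linarith
  have hhiN : (N : ℝ) / 2 + (N : ℝ) ^ (0.919 : ℝ) < N := by
    have : (0 : ℝ) < (N : ℝ) ^ (0.919 : ℝ) := by positivity
    linarith
  have hpleN : ∀ p : ℕ, (p : ℝ) ≤ (N : ℝ) / 2 + (N : ℝ) ^ (0.919 : ℝ) → p < N := by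
    intro p h2
    exact_mod_cast lt_of_le_of_lt h2 hhiN
  have hy3 : ((N : ℝ) ^ (1 / 3 : ℝ)) ^ (3 : ℕ) = N := by
    rw [← Real.rpow_natCast ((N : ℝ) ^ (1 / 3 : ℝ)) 3, ← Real.rpow_mul hN0.le]
    norm_num
  -- Finset versions
  set tA : Finset ℕ := (Finset.range (N + 1)).filter (fun p =>
    p.Prime ∧ (N : ℝ) / 2 - (N : ℝ) ^ (0.919 : ℝ) ≤ (p : ℝ) ∧
    (p : ℝ) ≤ (N : ℝ) / 2 + (N : ℝ) ^ (0.919 : ℝ) ∧ ¬ p ∣ N ∧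
    ∀ q : ℕ, q.Prime → (q : ℝ) < (N : ℝ) ^ (1 / 11.99 : ℝ) → ¬ q ∣ N →
      ¬ q ∣ (N - p)) with htA
  set tT : Finset (ℕ × ℕ) :=
    ((Finset.range (N + 1)) ×ˢ (Finset.range (N + 1))).filter (fun qp =>
    qp.1.Prime ∧ (N : ℝ) ^ (1 / 11.99 : ℝ) ≤ (qp.1 : ℝ) ∧
    (qp.1 : ℝ) < (N : ℝ) ^ (1 / 3 : ℝ) ∧ ¬ qp.1 ∣ N ∧
    qp.2.Prime ∧ (N : ℝ) / 2 - (N : ℝ) ^ (0.919 : ℝ) ≤ (qp.2 : ℝ) ∧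
    (qp.2 : ℝ) ≤ (N : ℝ) / 2 + (N : ℝ) ^ (0.919 : ℝ) ∧ ¬ qp.2 ∣ N ∧
    qp.1 ∣ (N - qp.2) ∧
    ∀ r : ℕ, r.Prime → (r : ℝ) < (N : ℝ) ^ (1 / 11.99 : ℝ) → ¬ r ∣ N →
      ¬ r ∣ (N - qp.2)) with htT
  set tB : Finset ℕ := (Finset.range (N + 1)).filter (fun p =>
    p.Prime ∧ (N : ℝ) / 2 - (N : ℝ) ^ (0.919 : ℝ) ≤ (p : ℝ) ∧
    (p : ℝ) ≤ (N : ℝ) / 2 + (N : ℝ) ^ (0.919 : ℝ) ∧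
    ∃ q : ℕ, q.Prime ∧ (N : ℝ) ^ (1 / 11.99 : ℝ) ≤ (q : ℝ) ∧ q ^ 2 ∣ (N - p)) with htB
  set tG : Finset ℕ := (Finset.range (N + 1)).filter (fun p =>
    p.Prime ∧ (N : ℝ) / 2 - (N : ℝ) ^ (0.919 : ℝ) ≤ (p : ℝ) ∧
    (p : ℝ) ≤ (N : ℝ) / 2 + (N : ℝ) ^ (0.919 : ℝ) ∧ 1 ≤ N - p ∧
    (N - p).primeFactorsList.length ≤ 3) with htG
  have eA : S1' N = tA.card := by
    rw [S1', ← Set.ncard_coe_finset]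
    congr 1
    ext p
    simp only [htA, Set.mem_setOf_eq, Finset.coe_filter, Finset.mem_range, Nat.lt_succ_iff]
    exact ⟨fun h => ⟨(hpleN p h.2.2.1).le, h⟩, fun h => h.2⟩
  have eT : S2' N = tT.card := by
    rw [S2', ← Set.ncard_coe_finset]
    congr 1
    ext qp
    simp only [htT, Set.mem_setOf_eq, Finset.coe_filter, Finset.mem_product,
      Finset.mem_range, Nat.lt_succ_iff]
    constructor
    · intro h
      refine ⟨⟨?_, (hpleN qp.2 h.2.2.2.2.2.2.1).le⟩, h⟩
      have hq : (qp.1 : ℝ) < (N : ℝ) ^ (1 / 3 : ℝ) := h.2.2.1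
      have hyN : (N : ℝ) ^ (1 / 3 : ℝ) ≤ N := by
        calc (N : ℝ) ^ (1 / 3 : ℝ) ≤ (N : ℝ) ^ (1 : ℝ) :=
          Real.rpow_le_rpow_of_exponent_le hN1 (by norm_num)
        _ = N := Real.rpow_one _
      exact_mod_cast (lt_of_lt_of_le hq hyN).le
    · exact fun h => h.2
  have eB : E1' N = tB.card := by
    rw [E1', ← Set.ncard_coe_finset]
    congr 1
    ext p
    simp only [htB, Set.mem_setOf_eq, Finset.coe_filter, Finset.mem_range, Nat.lt_succ_iff]
    exact ⟨fun h => ⟨(hpleN p h.2.2.1).le, h⟩, fun h => h.2⟩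
  have eG : ({p : ℕ | p.Prime ∧ (N : ℝ) / 2 - (N : ℝ) ^ (0.919 : ℝ) ≤ (p : ℝ) ∧
      (p : ℝ) ≤ (N : ℝ) / 2 + (N : ℝ) ^ (0.919 : ℝ) ∧ 1 ≤ N - p ∧
      (N - p).primeFactorsList.length ≤ 3}.ncard) = tG.card := by
    rw [← Set.ncard_coe_finset]
    congr 1
    ext p
    simp only [htG, Set.mem_setOf_eq, Finset.coe_filter, Finset.mem_range, Nat.lt_succ_iff]
    exact ⟨fun h => ⟨(hpleN p h.2.2.1).le, h⟩, fun h => h.2⟩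
  rw [eA, eT, eB, eG]
  -- heavy set
  set tA3 : Finset ℕ := tA.filter (fun p =>
    ¬ (∃ q : ℕ, q.Prime ∧ (N : ℝ) ^ (1 / 11.99 : ℝ) ≤ (q : ℝ) ∧ q ^ 2 ∣ (N - p)) ∧
    4 ≤ (N - p).primeFactorsList.length) with htA3
  set F : ℕ → Finset ℕ := fun p =>
    (N - p).primeFactors.filter (fun q : ℕ => ¬ ((N : ℝ) ^ (1 / 3 : ℝ) ≤ (q : ℝ))) with hF
  have hsub : tA ⊆ (tG ∪ tB) ∪ tA3 := by
    intro p hp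
    have hpc := hp
    rw [htA, Finset.mem_filter] at hpc
    obtain ⟨hpr, hprime, hlo, hhi, hpN, hsurv⟩ := hpc
    by_cases hbad : ∃ q : ℕ, q.Prime ∧ (N : ℝ) ^ (1 / 11.99 : ℝ) ≤ (q : ℝ) ∧ q ^ 2 ∣ (N - p)
    · refine Finset.mem_union_left _ (Finset.mem_union_right _ ?_)
      rw [htB, Finset.mem_filter]
      exact ⟨hpr, hprime, hlo, hhi, hbad⟩
    by_cases hbig : 4 ≤ (N - p).primeFactorsList.length
    · refine Finset.mem_union_right _ ?_
      rw [htA3, Finset.mem_filter]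
      exact ⟨hp, hbad, hbig⟩
    · refine Finset.mem_union_left _ (Finset.mem_union_left _ ?_)
      rw [htG, Finset.mem_filter]
      have hpltN : p < N := hpleN p hhi
      exact ⟨hpr, hprime, hlo, hhi, by omega, by omega⟩
  have hheavy : ∀ p ∈ tA3, 2 ≤ (F p).card ∧ ∀ q ∈ F p, (q, p) ∈ tT := by
    intro p hp3
    rw [htA3, Finset.mem_filter] at hp3
    obtain ⟨hpA, hnb, hbig⟩ := hp3
    rw [htA, Finset.mem_filter] at hpA
    obtain ⟨hprime, hlo, hhi, hpN, hsurv⟩ := hpA.2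
    have hpltN : p < N := hpleN p hhi
    have hp2 : 2 ≤ p := hprime.two_le
    set m : ℕ := N - p with hm
    have hm1 : 1 ≤ m := by omega
    have hmltN : m < N := by omega
    have key2 : ∀ q : ℕ, q.Prime → q ∣ m → ¬ q ∣ N := by
      intro q hq hqm hqN
      have hqp : q ∣ p := by
        have h := Nat.dvd_sub hqN hqm
        rwa [hm, Nat.sub_sub_self hpltN.le] at h
      have : q = p := (Nat.prime_dvd_prime_iff_eq hq hprime).mp hqp
      exact hpN (this ▸ hqN)
    have key3 : ∀ q : ℕ, q.Prime → q ∣ m → (N : ℝ) ^ (1 / 11.99 : ℝ) ≤ (q : ℝ) := by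
      intro q hq hqm
      by_contra h
      exact hsurv q hq (lt_of_not_ge h) (key2 q hq hqm) hqm
    have hsf : Squarefree m := by
      rw [Nat.squarefree_iff_prime_squarefree]
      intro q hq hq2
      have hqm : q ∣ m := dvd_trans (dvd_mul_right q q) hq2
      exact hnb ⟨q, hq, key3 q hq hqm, by rwa [pow_two]⟩
    have hnodup : m.primeFactorsList.Nodup :=
      (Nat.squarefree_iff_nodup_primeFactorsList (by omega)).mp hsf
    have hcard : m.primeFactors.card = m.primeFactorsList.length := by
      rw [← Nat.toFinset_factors, List.toFinset_card_of_nodup hnodup]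
    have hbigcard : (m.primeFactors.filter
        (fun q : ℕ => (N : ℝ) ^ (1 / 3 : ℝ) ≤ (q : ℝ))).card ≤ 2 := by
      by_contra hc
      push_neg at hc
      obtain ⟨s, hs, hs3⟩ :
          ∃ s ⊆ m.primeFactors.filter (fun q : ℕ => (N : ℝ) ^ (1 / 3 : ℝ) ≤ (q : ℝ)),
            s.card = 3 := Finset.exists_subset_card_eq hc
      have hsd : (∏ q ∈ s, q) ∣ m := by
        have h1 : (∏ q ∈ s, q) ∣ ∏ q ∈ m.primeFactors, q :=
          Finset.prod_dvd_prod_of_subset s m.primeFactors (fun q => q)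
            (hs.trans (Finset.filter_subset _ _))
        rwa [Nat.prod_primeFactors_of_squarefree hsf] at h1
      have hle : (∏ q ∈ s, q) ≤ m := Nat.le_of_dvd (by omega) hsd
      have hlow : (N : ℝ) ≤ ∏ q ∈ s, (q : ℝ) := by
        calc (N : ℝ) = ((N : ℝ) ^ (1 / 3 : ℝ)) ^ (3 : ℕ) := hy3.symm
          _ = ∏ _q ∈ s, (N : ℝ) ^ (1 / 3 : ℝ) := by rw [Finset.prod_const, hs3]
          _ ≤ ∏ q ∈ s, (q : ℝ) := by
            refine Finset.prod_le_prod (fun i _ => by positivity) (fun i hi => ?_)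
            exact (Finset.mem_filter.mp (hs hi)).2
      have : (N : ℝ) ≤ (m : ℝ) := by
        refine hlow.trans ?_
        rw [← Nat.cast_prod]
        exact_mod_cast hle
      have : N ≤ m := by exact_mod_cast this
      omega
    have hsmallcard : 2 ≤ (F p).card := by
      have hsum := Finset.card_filter_add_card_filter_not
        (s := m.primeFactors) (p := fun q : ℕ => (N : ℝ) ^ (1 / 3 : ℝ) ≤ (q : ℝ))
      have h44 : 4 ≤ m.primeFactors.card := hcard ▸ hbig
      have hFeq : (F p).card = (m.primeFactors.filter
          (fun q : ℕ => ¬ ((N : ℝ) ^ (1 / 3 : ℝ) ≤ (q : ℝ)))).card := by rw [hF]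
      omega
    refine ⟨hsmallcard, fun q hq => ?_⟩
    rw [hF, Finset.mem_filter] at hq
    obtain ⟨hqmem, hqy⟩ := hq
    have hqprime : q.Prime := Nat.prime_of_mem_primeFactors hqmem
    have hqm : q ∣ m := Nat.dvd_of_mem_primeFactors hqmem
    have hqleN : q ≤ N := le_trans (Nat.le_of_dvd (by omega) hqm) (by omega)
    rw [htT, Finset.mem_filter]
    refine ⟨Finset.mem_product.mpr ⟨Finset.mem_range.mpr (by omega),
      Finset.mem_range.mpr (by omega)⟩, hqprime, key3 q hqprime hqm,
      lt_of_not_ge hqy, key2 q hqprime hqm, hprime, hlo, hhi, hpN, hqm, hsurv⟩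
  have main := count_lemma tA tG tB tA3 tT F hsub
    (fun p hp => (hheavy p hp).1) (fun p hp => (hheavy p hp).2)
  linarith
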